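/- arXiv:1404.5981 — 3 statements merged into one kernel-verified Lean document; each statement's English description precedes it below -/
import Mathlib

section
/- Let H be a Hilbert space and μ, ν closed subspaces. If the quantity κ := inf { dist(x,ν)/dist(x, μ ∩ ν) : x ∈ μ, x ∉ ν } is strictly positive, then the subspace μ + ν is closed in H. -/
open Metric

/-- If `u` is orthogonal to a submodule `S`, then the distance from `u` to `S` is `‖u‖`. -/
lemma infDist_eq_norm_of_mem_orthogonal
    {H : Type*} [NormedAddCommGroup H] [InnerProductSpace ℝ H]
    (S : Submodule ℝ H) {u : H} (hu : u ∈ Sᗮ) :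
    Metric.infDist u (S : Set H) = ‖u‖ := by
  refine le_antisymm ?_ ?_
  · have := Metric.infDist_le_dist_of_mem (x := u) (Submodule.zero_mem S)
    simpa [dist_eq_norm] using this
  · have hne : (S : Set H).Nonempty := ⟨0, Submodule.zero_mem S⟩
    have h1 : ENNReal.ofReal ‖u‖ ≤ Metric.infEDist u (S : Set H) := by
      rw [Metric.le_infEDist]
      intro y hy
      have hinner : (inner ℝ u y : ℝ) = 0 := Submodule.inner_left_of_mem_orthogonal hy hu
      have hle : ‖u‖ ≤ dist u y := by
        have h2 : ‖u - y‖ ^ 2 = ‖u‖ ^ 2 - 2 * inner ℝ u y + ‖y‖ ^ 2 := norm_sub_sq_real u y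
        have h3 : ‖u‖ ^ 2 ≤ ‖u - y‖ ^ 2 := by nlinarith [sq_nonneg ‖y‖]
        have := Real.sqrt_le_sqrt h3
        rw [Real.sqrt_sq (norm_nonneg _), Real.sqrt_sq (norm_nonneg _)] at this
        simpa [dist_eq_norm] using this
      rw [edist_dist]
      exact ENNReal.ofReal_le_ofReal hle
    have h4 := ENNReal.toReal_mono (Metric.infEdist_ne_top hne) h1
    rwa [ENNReal.toReal_ofReal (norm_nonneg _)] at h4

/-- if the infimum
`κ = inf { dist(x,ν)/dist(x,μ∩ν) : x ∈ μ, x ∉ ν }` is strictly positive,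
then `μ + ν` is closed. -/
theorem sum_closed_of_inf_dist_ratio_pos
    {H : Type*} [NormedAddCommGroup H] [InnerProductSpace ℝ H] [CompleteSpace H]
    (μ ν : Submodule ℝ H)
    (hμ : IsClosed (μ : Set H)) (hν : IsClosed (ν : Set H))
    (hne : ∃ x ∈ μ, x ∉ ν)
    (hκ : 0 < sInf { r : ℝ | ∃ x ∈ μ, x ∉ ν ∧
      r = Metric.infDist x (ν : Set H) / Metric.infDist x ((μ ⊓ ν : Submodule ℝ H) : Set H) }) :
    IsClosed ((μ ⊔ ν : Submodule ℝ H) : Set H) := by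
  classical
  set κ := sInf { r : ℝ | ∃ x ∈ μ, x ∉ ν ∧
      r = Metric.infDist x (ν : Set H) / Metric.infDist x ((μ ⊓ ν : Submodule ℝ H) : Set H) }
    with hκdef
  have hbdd : BddBelow { r : ℝ | ∃ x ∈ μ, x ∉ ν ∧
      r = Metric.infDist x (ν : Set H) / Metric.infDist x ((μ ⊓ ν : Submodule ℝ H) : Set H) } := by
    refine ⟨0, fun r hr => ?_⟩
    obtain ⟨x, _, _, rfl⟩ := hr
    exact div_nonneg Metric.infDist_nonneg Metric.infDist_nonneg
  -- the closed subspace μ ⊓ ν and its complete instance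
  have hDclosed : IsClosed ((μ ⊓ ν : Submodule ℝ H) : Set H) := by
    rw [Submodule.coe_inf]; exact hμ.inter hν
  haveI : CompleteSpace (μ ⊓ ν : Submodule ℝ H) := hDclosed.completeSpace_coe
  set M : Submodule ℝ H := μ ⊓ (μ ⊓ ν)ᗮ with hMdef
  have hMclosed : IsClosed (M : Set H) := by
    rw [hMdef, Submodule.coe_inf]
    exact hμ.inter (μ ⊓ ν).isClosed_orthogonal
  -- key estimate
  have key : ∀ u ∈ M, ∀ v ∈ ν, κ * ‖u‖ ≤ ‖u + v‖ := by
    intro u hu v hv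
    obtain ⟨huμ, huo⟩ := hu
    by_cases huν : u ∈ ν
    · have : u = 0 := by
        have : u ∈ (⊥ : Submodule ℝ H) :=
          (Submodule.orthogonal_disjoint (μ ⊓ ν)).le_bot ⟨⟨huμ, huν⟩, huo⟩
        simpa using this
      simp [this]
    · have hu0 : u ≠ 0 := fun h => huν (h ▸ ν.zero_mem)
      have hdist : Metric.infDist u ((μ ⊓ ν : Submodule ℝ H) : Set H) = ‖u‖ :=
        infDist_eq_norm_of_mem_orthogonal _ huo
      have hmem : Metric.infDist u (ν : Set H) / ‖u‖ ∈ { r : ℝ | ∃ x ∈ μ, x ∉ ν ∧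
          r = Metric.infDist x (ν : Set H) /
            Metric.infDist x ((μ ⊓ ν : Submodule ℝ H) : Set H) } :=
        ⟨u, huμ, huν, by rw [hdist]⟩
      have hle : κ ≤ Metric.infDist u (ν : Set H) / ‖u‖ := csInf_le hbdd hmem
      have hnorm : (0 : ℝ) < ‖u‖ := norm_pos_iff.mpr hu0
      have h1 : κ * ‖u‖ ≤ Metric.infDist u (ν : Set H) := by
        rw [le_div_iff₀ hnorm] at hle; exact hle
      have h2 : Metric.infDist u (ν : Set H) ≤ ‖u + v‖ := by
        have := Metric.infDist_le_dist_of_mem (x := u) (ν.neg_mem hv)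
        simpa [dist_eq_norm, sub_neg_eq_add] using this
      linarith
  -- μ ⊔ ν = M ⊔ ν
  have hsup : μ ⊔ ν = M ⊔ ν := by
    refine le_antisymm (sup_le ?_ le_sup_right) (sup_le (le_trans inf_le_left le_sup_left)
      le_sup_right)
    intro x hx
    set p : H := (Submodule.orthogonalProjectionOnto (μ ⊓ ν) x : H) with hp
    have hpmem : p ∈ μ ⊓ ν := (Submodule.orthogonalProjectionOnto (μ ⊓ ν) x).2
    have hxM : x - p ∈ M := ⟨μ.sub_mem hx hpmem.1, Submodule.sub_starProjection_mem_orthogonal (K := μ ⊓ ν) x⟩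
    have : x = (x - p) + p := by abel
    rw [this]
    exact Submodule.add_mem_sup hxM hpmem.2
  rw [hsup]
  -- sequential closedness
  refine IsSeqClosed.isClosed ?_
  intro f w hf hfw
  have hchoose : ∀ n, ∃ u ∈ M, ∃ v ∈ ν, u + v = f n := fun n => Submodule.mem_sup.mp (hf n)
  choose u hu v hv huv using hchoose
  have hfc : CauchySeq f := hfw.cauchySeq
  have huc : CauchySeq u := by
    rw [Metric.cauchySeq_iff] at hfc ⊢
    intro ε hε
    obtain ⟨N, hN⟩ := hfc (κ * ε) (by positivity)
    refine ⟨N, fun m hm n hn => ?_⟩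
    have hk : κ * ‖u m - u n‖ ≤ ‖(u m - u n) + (v m - v n)‖ :=
      key _ (M.sub_mem (hu m) (hu n)) _ (ν.sub_mem (hv m) (hv n))
    have heq : (u m - u n) + (v m - v n) = f m - f n := by
      rw [← huv m, ← huv n]; abel
    rw [heq] at hk
    have hlt : κ * ‖u m - u n‖ < κ * ε := lt_of_le_of_lt hk (by
      simpa [dist_eq_norm] using hN m hm n hn)
    rw [dist_eq_norm]
    exact lt_of_mul_lt_mul_left hlt hκ.le
  obtain ⟨x, hx⟩ := cauchySeq_tendsto_of_complete huc
  have hxM : x ∈ M := hMclosed.mem_of_tendsto hx (Filter.Eventually.of_forall hu)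
  have hvlim : Filter.Tendsto v Filter.atTop (nhds (w - x)) := by
    have heq : v = fun n => f n - u n := funext fun n => by rw [← huv n]; abel
    rw [heq]
    exact hfw.sub hx
  have hwx : w - x ∈ ν := hν.mem_of_tendsto hvlim (Filter.Eventually.of_forall hv)
  have : w = x + (w - x) := by abel
  rw [this]
  exact Submodule.add_mem_sup hxM hwx
end

section
/- Let H be a Hilbert space, ν a closed subspace with orthogonal projection P onto ν, and μ a closed subspace. Suppose there is a constant K > 0 such that ‖x‖ ≤ K ‖x − Px‖ for all x ∈ μ ∩ (μ ∩ ν)^⊥. Then for every x ∈ μ, dist(x, μ ∩ ν) ≤ K ‖x − Px‖ = K dist(x, ν); in particular μ + ν is closed. -/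
open Metric RealInnerProductSpace

/-- pointwise minimality of orthogonal projection -/
lemma norm_sub_proj_le' {H : Type*} [NormedAddCommGroup H] [InnerProductSpace ℝ H]
    (ν : Submodule ℝ H) [ν.HasOrthogonalProjection] (x v : H) (hv : v ∈ ν) :
    ‖x - (ν.orthogonalProjectionOnto x : H)‖ ≤ ‖x - v‖ := by
  have horth : x - (ν.orthogonalProjectionOnto x : H) ∈ νᗮ :=
    Submodule.sub_starProjection_mem_orthogonal x
  have hmem : (ν.orthogonalProjectionOnto x : H) - v ∈ ν :=
    Submodule.sub_mem _ (Submodule.coe_mem _) hv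
  have hinner : (inner ℝ (x - (ν.orthogonalProjectionOnto x : H)) ((ν.orthogonalProjectionOnto x : H) - v) : ℝ) = 0 :=
    by rw [real_inner_comm]; exact horth _ hmem
  have hdecomp : x - v
      = (x - (ν.orthogonalProjectionOnto x : H)) + ((ν.orthogonalProjectionOnto x : H) - v) := by abel
  have hpy := norm_add_sq_real (x - (ν.orthogonalProjectionOnto x : H))
    ((ν.orthogonalProjectionOnto x : H) - v)
  rw [hinner] at hpy
  have hsq : ‖x - (ν.orthogonalProjectionOnto x : H)‖ ^ 2 ≤ ‖x - v‖ ^ 2 := by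
    rw [hdecomp, hpy]; nlinarith [sq_nonneg ‖(ν.orthogonalProjectionOnto x : H) - v‖]
  nlinarith [norm_nonneg (x - (ν.orthogonalProjectionOnto x : H)), norm_nonneg (x - v)]

/-- if `‖x‖ ≤ K‖x − Px‖` for all `x ∈ μ ∩ (μ∩ν)^⊥`, where `P` is the
orthogonal projection onto `ν`, then `dist(x, μ∩ν) ≤ K‖x − Px‖ = K·dist(x,ν)` for all
`x ∈ μ`, and `μ + ν` is closed. -/
theorem dist_le_and_sum_closed_of_norm_bound
    {H : Type*} [NormedAddCommGroup H] [InnerProductSpace ℝ H] [CompleteSpace H]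
    (μ ν : Submodule ℝ H)
    (hμ : IsClosed (μ : Set H)) (hν : IsClosed (ν : Set H))
    [ν.HasOrthogonalProjection]
    (K : ℝ) (hK : 0 < K)
    (hbound : ∀ x ∈ μ, x ∈ ((μ ⊓ ν : Submodule ℝ H) : Submodule ℝ H)ᗮ →
      ‖x‖ ≤ K * ‖x - (ν.orthogonalProjectionOnto x : H)‖) :
    (∀ x ∈ μ,
      Metric.infDist x (((μ ⊓ ν : Submodule ℝ H) : Submodule ℝ H) : Set H)
        ≤ K * ‖x - (ν.orthogonalProjectionOnto x : H)‖ ∧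
      ‖x - (ν.orthogonalProjectionOnto x : H)‖ = Metric.infDist x (ν : Set H)) ∧
    IsClosed ((μ ⊔ ν : Submodule ℝ H) : Set H) := by
  set W : Submodule ℝ H := μ ⊓ ν with hW
  have hWclosed : IsClosed (W : Set H) := by
    simpa [hW, Submodule.coe_inf] using hμ.inter hν
  haveI : CompleteSpace W := hWclosed.completeSpace_coe
  haveI : W.HasOrthogonalProjection := Submodule.HasOrthogonalProjection.ofCompleteSpace W
  -- key: projection onto ν fixes elements of W
  have hProjW : ∀ w ∈ W, (ν.orthogonalProjectionOnto w : H) = w := fun w hw =>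
    Submodule.starProjection_eq_self_iff.2 hw.2
  -- decomposition estimate for x ∈ μ
  have hmain : ∀ x ∈ μ,
      Metric.infDist x (W : Set H) ≤ K * ‖x - (ν.orthogonalProjectionOnto x : H)‖ := by
    intro x hx
    set w : H := (W.orthogonalProjectionOnto x : H) with hw'
    have hwW : w ∈ W := Submodule.coe_mem _
    set y : H := x - w with hy'
    have hyμ : y ∈ μ := μ.sub_mem hx hwW.1
    have hyperp : y ∈ Wᗮ := Submodule.sub_starProjection_mem_orthogonal x
    have hPy : (ν.orthogonalProjectionOnto y : H) = (ν.orthogonalProjectionOnto x : H) - w := by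
      rw [hy', map_sub]
      simp [hProjW w hwW]
    have hbd := hbound y hyμ hyperp
    have hyP : y - (ν.orthogonalProjectionOnto y : H) = x - (ν.orthogonalProjectionOnto x : H) := by
      rw [hPy, hy']; abel
    rw [hyP] at hbd
    calc Metric.infDist x (W : Set H) ≤ dist x w := Metric.infDist_le_dist_of_mem hwW
      _ = ‖y‖ := by rw [dist_eq_norm]
      _ ≤ K * ‖x - (ν.orthogonalProjectionOnto x : H)‖ := hbd
  have hdist : ∀ x : H, ‖x - (ν.orthogonalProjectionOnto x : H)‖ = Metric.infDist x (ν : Set H) := by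
    intro x
    have hne : (ν : Set H).Nonempty := ⟨0, ν.zero_mem⟩
    refine le_antisymm ?_ ?_
    · by_contra h
      push_neg at h
      obtain ⟨v, hv, hd⟩ := (Metric.infDist_lt_iff hne).1 h
      rw [dist_eq_norm] at hd
      exact absurd (norm_sub_proj_le' ν x v hv) (by linarith)
    · have := Metric.infDist_le_dist_of_mem (x := x) (Submodule.coe_mem (ν.orthogonalProjectionOnto x))
      rwa [dist_eq_norm] at this
  refine ⟨fun x hx => ⟨hmain x hx, hdist x⟩, ?_⟩
  -- closedness of μ ⊔ ν
  set μ' : Submodule ℝ H := μ ⊓ Wᗮ with hμ'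
  have hμ'closed : IsClosed (μ' : Set H) := by
    simpa [hμ', Submodule.coe_inf] using hμ.inter W.isClosed_orthogonal
  have hsup : μ ⊔ ν = μ' ⊔ ν := by
    refine le_antisymm (sup_le ?_ le_sup_right) (sup_le (le_trans inf_le_left le_sup_left) le_sup_right)
    intro x hx
    have hwW : (W.orthogonalProjectionOnto x : H) ∈ W := Submodule.coe_mem _
    have h1 : x - (W.orthogonalProjectionOnto x : H) ∈ μ' :=
      ⟨μ.sub_mem hx hwW.1, Submodule.sub_starProjection_mem_orthogonal x⟩
    have : x = (x - (W.orthogonalProjectionOnto x : H)) + (W.orthogonalProjectionOnto x : H) := by abel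
    rw [this]
    exact Submodule.add_mem _ (Submodule.mem_sup_left h1) (Submodule.mem_sup_right hwW.2)
  rw [hsup]
  -- sequential closedness argument
  have hkey : ∀ u ∈ μ', ∀ v ∈ ν, ‖u‖ ≤ K * ‖u + v‖ := by
    intro u hu v hv
    have hbd := hbound u hu.1 hu.2
    have hle : ‖u - (ν.orthogonalProjectionOnto u : H)‖ ≤ ‖u + v‖ := by
      have := norm_sub_proj_le' ν u (-v) (ν.neg_mem hv)
      simpa [sub_neg_eq_add] using this
    calc ‖u‖ ≤ K * ‖u - (ν.orthogonalProjectionOnto u : H)‖ := hbd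
      _ ≤ K * ‖u + v‖ := by gcongr
  apply IsSeqClosed.isClosed
  intro f z hf hfz
  choose a ha b hb hab using fun n => Submodule.mem_sup.1 (hf n)
  have hcauchy : CauchySeq a := by
    have hfc : CauchySeq f := hfz.cauchySeq
    rw [Metric.cauchySeq_iff] at hfc ⊢
    intro ε hε
    obtain ⟨N, hN⟩ := hfc (ε / K) (by positivity)
    refine ⟨N, fun m hm n hn => ?_⟩
    have hmem : a m - a n ∈ μ' := μ'.sub_mem (ha m) (ha n)
    have hvmem : b m - b n ∈ ν := ν.sub_mem (hb m) (hb n)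
    have := hkey _ hmem _ hvmem
    have hsum : (a m - a n) + (b m - b n) = f m - f n := by
      rw [← hab m, ← hab n]; abel
    rw [hsum] at this
    have hd := hN m hm n hn
    rw [dist_eq_norm] at hd ⊢
    calc ‖a m - a n‖ ≤ K * ‖f m - f n‖ := this
      _ < K * (ε / K) := by gcongr
      _ = ε := by field_simp
  obtain ⟨x, hxa⟩ := cauchySeq_tendsto_of_complete hcauchy
  have hxμ' : x ∈ μ' := hμ'closed.mem_of_tendsto hxa (Filter.Eventually.of_forall ha)
  have hbz : Filter.Tendsto b Filter.atTop (nhds (z - x)) := by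
    have : b = fun n => f n - a n := by
      funext n; rw [← hab n]; abel
    rw [this]
    exact hfz.sub hxa
  have hzν : z - x ∈ ν := hν.mem_of_tendsto hbz (Filter.Eventually.of_forall hb)
  have : z = x + (z - x) := by abel
  rw [this]
  exact Submodule.add_mem _ (Submodule.mem_sup_left hxμ') (Submodule.mem_sup_right hzν)
end

section
/- Let Ω ⊂ ℝⁿ be a bounded Lipschitz domain, V ∈ C¹ on a neighborhood of Ω̄, λ ∈ ℝ, and for t ∈ (0,1] define D_t(u,u) = t^{n−2} ∫_Ω [|∇u|² + t²(V(tx) − λ)u²] dx on H¹(Ω). Then for fixed u ∈ H¹(Ω), the map t ↦ D_t(u,u) is differentiable, and if u satisfies the Euler–Lagrange relation D_t(u,v) = 0 for all v ∈ H¹(Ω) (Neumann kernel condition), then d/dt D_t(u,u) = t^{n−2} ∫_Ω u² (d/dt)[t²V(tx) − t²λ] dx = t^{n−1} ∫_Ω u² [2(V(tx) − λ) + t x·∇V(tx)] dx; in particular this derivative is strictly negative whenever λ > V(y) + ½ y·∇V(y) for all y ∈ Ω_t and u ≢ 0. -/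
open MeasureTheory RealInnerProductSpace

section aux

variable {n : ℕ}

local notation "E" => EuclideanSpace ℝ (Fin n)

lemma fderiv_eq_inner_gradient (V : E → ℝ) (y x : E) :
    fderiv ℝ V y x = ⟪gradient V y, x⟫ := by
  rw [gradient, ← InnerProductSpace.toDual_apply_apply]
  simp

lemma grad_continuous (V : E → ℝ) (hV : ContDiff ℝ 1 V) : Continuous (gradient V) := by
  have : Continuous (fderiv ℝ V) := hV.continuous_fderiv one_ne_zero
  exact (InnerProductSpace.toDual ℝ E).symm.continuous.comp this

lemma hasDerivAt_V_smul (V : E → ℝ) (hV : ContDiff ℝ 1 V) (x : E) (s : ℝ) :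
    HasDerivAt (fun r : ℝ => V (r • x)) ⟪x, gradient V (s • x)⟫ s := by
  have h1 : HasDerivAt (fun r : ℝ => r • x) x s := by
    simpa using (hasDerivAt_id s).smul_const x
  have h2 := ((hV.differentiable one_ne_zero (s • x)).hasFDerivAt).comp_hasDerivAt s h1
  have : fderiv ℝ V (s • x) x = ⟪x, gradient V (s • x)⟫ := by
    rw [fderiv_eq_inner_gradient, real_inner_comm]
  rw [← this]; exact h2

end aux

set_option maxHeartbeats 1000000 in
/-- for the dilated form
`D_t(u,u) = t^{n−2} ∫_Ω [|∇u|² + t²(V(tx) − λ)u²] dx`, if `u` is in the kernel of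
the form `D_t`, then `t ↦ D_t(u,u)` is differentiable with
`d/dt D_t(u,u) = t^{n−1} ∫_Ω u² [2(V(tx) − λ) + t x·∇V(tx)] dx`, and this derivative
is strictly negative when `λ > V(y) + ½ y·∇V(y)` for all `y ∈ tΩ` and `u ≢ 0`. -/
theorem derivative_of_dilated_form
    {n : ℕ} (Ω : Set (EuclideanSpace ℝ (Fin n)))
    (hΩopen : IsOpen Ω) (hΩbd : Bornology.IsBounded Ω)
    (V : EuclideanSpace ℝ (Fin n) → ℝ) (hV : ContDiff ℝ 1 V)
    (lam : ℝ) (t : ℝ) (ht : 0 < t) (ht1 : t ≤ 1)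
    (u : EuclideanSpace ℝ (Fin n) → ℝ) (hu : Differentiable ℝ u)
    (hu2 : Integrable (fun x => u x ^ 2) (volume.restrict Ω))
    (hgrad2 : Integrable (fun x => ‖gradient u x‖ ^ 2) (volume.restrict Ω))
    (hker : ∀ v : EuclideanSpace ℝ (Fin n) → ℝ, Differentiable ℝ v →
      ∫ x in Ω, (⟪gradient u x, gradient v x⟫ + t ^ 2 * (V (t • x) - lam) * u x * v x) = 0) :
    HasDerivAt
      (fun s : ℝ => s ^ ((n : ℤ) - 2) *
        ∫ x in Ω, (⟪gradient u x, gradient u x⟫ + s ^ 2 * (V (s • x) - lam) * u x ^ 2))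
      (t ^ ((n : ℤ) - 1) *
        ∫ x in Ω, u x ^ 2 * (2 * (V (t • x) - lam) + t * ⟪x, gradient V (t • x)⟫)) t ∧
    ((∀ y ∈ (fun x => t • x) '' Ω, V y + (1 / 2) * ⟪y, gradient V y⟫ < lam) →
      0 < ∫ x in Ω, u x ^ 2 →
      t ^ ((n : ℤ) - 1) *
        ∫ x in Ω, u x ^ 2 * (2 * (V (t • x) - lam) + t * ⟪x, gradient V (t • x)⟫) < 0) := by
  -- bounding radius
  obtain ⟨R₀, hR₀⟩ := hΩbd.subset_closedBall (0 : EuclideanSpace ℝ (Fin n))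
  set R : ℝ := max R₀ 1 with hRdef
  have hR1 : (1:ℝ) ≤ R := le_max_right _ _
  have hR0 : (0:ℝ) < R := lt_of_lt_of_le one_pos hR1
  have hR : Ω ⊆ Metric.closedBall 0 R :=
    hR₀.trans (Metric.closedBall_subset_closedBall (le_max_left _ _))
  have hxR : ∀ x ∈ Ω, ‖x‖ ≤ R := by
    intro x hx
    simpa [Metric.mem_closedBall, dist_eq_norm] using hR hx
  -- compact set containing all s • x
  set K : Set (EuclideanSpace ℝ (Fin n)) := Metric.closedBall 0 (2 * R) with hKdef
  have hKcp : IsCompact K := isCompact_closedBall _ _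
  have hsmem : ∀ s : ℝ, |s| ≤ 2 → ∀ x ∈ Ω, s • x ∈ K := by
    intro s hs x hx
    have : ‖s • x‖ ≤ 2 * R := by
      rw [norm_smul]
      have := hxR x hx
      have hs' : ‖s‖ ≤ 2 := by simpa [Real.norm_eq_abs] using hs
      have h0 : (0:ℝ) ≤ ‖x‖ := norm_nonneg _
      nlinarith [norm_nonneg s]
    simpa [hKdef, Metric.mem_closedBall, dist_eq_norm] using this
  -- bounds for V and its gradient on K
  obtain ⟨C₀, hC₀⟩ := hKcp.exists_bound_of_continuousOn hV.continuous.continuousOn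
  obtain ⟨C₁, hC₁⟩ := hKcp.exists_bound_of_continuousOn (grad_continuous V hV).continuousOn
  set C : ℝ := max C₀ 0 with hCdef
  set C' : ℝ := max C₁ 0 with hC'def
  have hC : ∀ y ∈ K, |V y| ≤ C := fun y hy => le_trans (hC₀ y hy) (le_max_left _ _)
  have hC' : ∀ y ∈ K, ‖gradient V y‖ ≤ C' := fun y hy => le_trans (hC₁ y hy) (le_max_left _ _)
  have hCnn : 0 ≤ C := le_max_right _ _
  have hC'nn : 0 ≤ C' := le_max_right _ _
  -- the integrand and its s-derivative
  set F : ℝ → EuclideanSpace ℝ (Fin n) → ℝ := fun s x =>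
    ⟪gradient u x, gradient u x⟫ + s ^ 2 * (V (s • x) - lam) * u x ^ 2 with hFdef
  set F' : ℝ → EuclideanSpace ℝ (Fin n) → ℝ := fun s x =>
    (2 * s * (V (s • x) - lam) + s ^ 2 * ⟪x, gradient V (s • x)⟫) * u x ^ 2 with hF'def
  set B : ℝ := 4 * (C + |lam|) + 4 * (R * C') with hBdef
  have hΩm : MeasurableSet Ω := hΩopen.measurableSet
  -- key facts about membership in ball t t
  have hball : ∀ s ∈ Metric.ball t t, |s| ≤ 2 ∧ s^2 ≤ 4 := by
    intro s hs
    rw [Metric.mem_ball, Real.dist_eq] at hs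
    have h1 : |s| ≤ 2 := by
      rcases abs_lt.1 hs with ⟨h2, h3⟩
      rw [abs_le]; constructor <;> nlinarith
    exact ⟨h1, by nlinarith [abs_nonneg s, sq_abs s]⟩
  -- bound on the derivative integrand
  have hFbd : ∀ x ∈ Ω, ∀ s ∈ Metric.ball t t, ‖F' s x‖ ≤ B * u x ^ 2 := by
    intro x hx s hs
    obtain ⟨hs2, hs4⟩ := hball s hs
    have hmemK : s • x ∈ K := hsmem s hs2 x hx
    have hVb : |V (s • x) - lam| ≤ C + |lam| := by
      calc |V (s • x) - lam| ≤ |V (s • x)| + |lam| := abs_sub _ _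
        _ ≤ C + |lam| := by linarith [hC _ hmemK]
    have hinb : |⟪x, gradient V (s • x)⟫| ≤ R * C' := by
      calc |⟪x, gradient V (s • x)⟫| ≤ ‖x‖ * ‖gradient V (s • x)‖ := abs_real_inner_le_norm _ _
        _ ≤ R * C' := by
            have := hxR x hx
            have := hC' _ hmemK
            nlinarith [norm_nonneg x, norm_nonneg (gradient V (s • x))]
    have hu2nn : (0:ℝ) ≤ u x ^ 2 := sq_nonneg _
    have : ‖F' s x‖ = |2 * s * (V (s • x) - lam) + s ^ 2 * ⟪x, gradient V (s • x)⟫| * u x ^ 2 := by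
      rw [hF'def]
      simp only [Real.norm_eq_abs, abs_mul, abs_of_nonneg hu2nn]
    rw [this]
    have habs : |2 * s * (V (s • x) - lam) + s ^ 2 * ⟪x, gradient V (s • x)⟫| ≤ B := by
      calc |2 * s * (V (s • x) - lam) + s ^ 2 * ⟪x, gradient V (s • x)⟫|
          ≤ |2 * s * (V (s • x) - lam)| + |s ^ 2 * ⟪x, gradient V (s • x)⟫| := abs_add_le _ _
        _ ≤ B := by
            rw [abs_mul, abs_mul, abs_mul]
            have h2s : |(2:ℝ)| * |s| ≤ 4 := by rw [abs_two]; linarith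
            have hsq : |s ^ 2| ≤ 4 := by rwa [abs_of_nonneg (sq_nonneg s)]
            rw [hBdef]
            nlinarith [abs_nonneg (V (s • x) - lam), abs_nonneg (⟪x, gradient V (s • x)⟫ : ℝ),
              abs_nonneg s, abs_nonneg (s^2)]
    nlinarith [habs, hu2nn, abs_nonneg (2 * s * (V (s • x) - lam) + s ^ 2 * ⟪x, gradient V (s • x)⟫)]
  -- pointwise derivative
  have hderiv : ∀ x : EuclideanSpace ℝ (Fin n), ∀ s : ℝ, HasDerivAt (fun r => F r x) (F' s x) s := by
    intro x s
    have h1 : HasDerivAt (fun r : ℝ => r ^ 2) (2 * s) s := by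
      simpa using hasDerivAt_pow 2 s
    have h2 : HasDerivAt (fun r : ℝ => V (r • x) - lam) ⟪x, gradient V (s • x)⟫ s :=
      (hasDerivAt_V_smul V hV x s).sub_const lam
    have h3 := (h1.mul h2).mul_const (u x ^ 2)
    have h4 := h3.const_add (⟪gradient u x, gradient u x⟫ : ℝ)
    exact h4
  -- measurability of F s
  have hinner_meas : AEStronglyMeasurable (fun x : EuclideanSpace ℝ (Fin n) => (⟪gradient u x, gradient u x⟫ : ℝ))
      (volume.restrict Ω) := by
    have : (fun x : EuclideanSpace ℝ (Fin n) => (⟪gradient u x, gradient u x⟫ : ℝ)) = fun x => ‖gradient u x‖ ^ 2 := by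
      funext x; rw [real_inner_self_eq_norm_sq]
    rw [this]; exact hgrad2.aestronglyMeasurable
  have hFmeas : ∀ s : ℝ, AEStronglyMeasurable (F s) (volume.restrict Ω) := by
    intro s
    apply hinner_meas.add
    exact Continuous.aestronglyMeasurable ((continuous_const.mul ((hV.continuous.comp (continuous_const_smul s)).sub continuous_const)).mul ((hu.continuous.pow 2)))
  -- integrability of F s for any s with |s| ≤ 2
  have hFint : ∀ s : ℝ, |s| ≤ 2 → Integrable (F s) (volume.restrict Ω) := by
    intro s hs2
    have hsq : s ^ 2 ≤ 4 := by nlinarith [abs_nonneg s, sq_abs s]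
    have h1 : Integrable (fun x : EuclideanSpace ℝ (Fin n) => (⟪gradient u x, gradient u x⟫ : ℝ))
        (volume.restrict Ω) := by
      have : (fun x : EuclideanSpace ℝ (Fin n) => (⟪gradient u x, gradient u x⟫ : ℝ)) = fun x => ‖gradient u x‖ ^ 2 := by
        funext x; rw [real_inner_self_eq_norm_sq]
      rw [this]; exact hgrad2
    have h2 : Integrable (fun x : EuclideanSpace ℝ (Fin n) => s ^ 2 * (V (s • x) - lam) * u x ^ 2)
        (volume.restrict Ω) := by
      apply Integrable.mono' (hu2.const_mul (4 * (C + |lam|)))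
      · exact Continuous.aestronglyMeasurable ((continuous_const.mul ((hV.continuous.comp (continuous_const_smul s)).sub continuous_const)).mul ((hu.continuous.pow 2)))
      · rw [ae_restrict_iff' hΩm]
        filter_upwards with x hx
        have hmemK : s • x ∈ K := hsmem s hs2 x hx
        have hVb : |V (s • x) - lam| ≤ C + |lam| := by
          calc |V (s • x) - lam| ≤ |V (s • x)| + |lam| := abs_sub _ _
            _ ≤ C + |lam| := by linarith [hC _ hmemK]
        have hu2nn : (0:ℝ) ≤ u x ^ 2 := sq_nonneg _
        rw [Real.norm_eq_abs, abs_mul, abs_mul, abs_of_nonneg hu2nn,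
          abs_of_nonneg (sq_nonneg s)]
        exact mul_le_mul_of_nonneg_right
          (mul_le_mul hsq hVb (abs_nonneg _) (by norm_num)) hu2nn
    exact h1.add h2
  -- F' t measurable
  have hF'meas : AEStronglyMeasurable (F' t) (volume.restrict Ω) := by
    have hgc : Continuous (gradient V) := grad_continuous V hV
    have hct : Continuous (fun x : EuclideanSpace ℝ (Fin n) => t • x) :=
      continuous_const_smul t
    exact Continuous.aestronglyMeasurable
      (((continuous_const.mul ((hV.continuous.comp hct).sub continuous_const)).add
        ((continuous_const.mul (continuous_id.inner (hgc.comp hct))))).mul (hu.continuous.pow 2))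
  -- apply dominated differentiation under integral
  have ht2 : |t| ≤ 2 := by rw [abs_of_pos ht]; linarith
  have key := hasDerivAt_integral_of_dominated_loc_of_deriv_le (μ := volume.restrict Ω)
    (F := F) (F' := F') (x₀ := t) (bound := fun x => B * u x ^ 2) (Metric.ball_mem_nhds t ht)
    (Filter.Eventually.of_forall hFmeas) (hFint t ht2) hF'meas
    (by rw [ae_restrict_iff' hΩm]
        filter_upwards with x hx s hs
        exact hFbd x hx s hs)
    (hu2.const_mul B)
    (by filter_upwards with x s _
        exact hderiv x s)
  obtain ⟨hF'int, hG⟩ := key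
  -- kernel condition: the form at t vanishes
  have hG0 : (∫ x in Ω, F t x) = 0 := by
    rw [← hker u hu]
    apply integral_congr_ae
    filter_upwards with x
    rw [hFdef]; ring
  -- derivative of s ↦ s^(n-2)
  have hz : HasDerivAt (fun s : ℝ => s ^ ((n : ℤ) - 2))
      (((n : ℤ) - 2 : ℤ) * t ^ ((n : ℤ) - 2 - 1)) t :=
    hasDerivAt_zpow _ _ (Or.inl ht.ne')
  have hmul := hz.mul hG
  -- rewrite the derivative value
  have hval : (((n : ℤ) - 2 : ℤ) : ℝ) * t ^ ((n : ℤ) - 2 - 1) * (∫ x in Ω, F t x)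
      + t ^ ((n : ℤ) - 2) * (∫ x in Ω, F' t x)
      = t ^ ((n : ℤ) - 1) *
        ∫ x in Ω, u x ^ 2 * (2 * (V (t • x) - lam) + t * ⟪x, gradient V (t • x)⟫) := by
    rw [hG0, mul_zero, zero_add]
    have h1 : (∫ x in Ω, F' t x)
        = t * ∫ x in Ω, u x ^ 2 * (2 * (V (t • x) - lam) + t * ⟪x, gradient V (t • x)⟫) := by
      rw [← integral_const_mul]
      apply integral_congr_ae
      filter_upwards with x
      rw [hF'def]; ring
    rw [h1, ← mul_assoc]
    congr 1
    rw [← zpow_add_one₀ ht.ne']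
    congr 1
    ring
  constructor
  · have := hmul
    rw [hval] at this
    exact this
  · -- negativity
    intro hlt hu0
    have hgneg : ∀ x ∈ Ω, 2 * (V (t • x) - lam) + t * ⟪x, gradient V (t • x)⟫ < 0 := by
      intro x hx
      have := hlt (t • x) ⟨x, hx, rfl⟩
      rw [real_inner_smul_left] at this
      linarith
    have hint : Integrable
        (fun x => u x ^ 2 * (2 * (V (t • x) - lam) + t * ⟪x, gradient V (t • x)⟫))
        (volume.restrict Ω) := by
      have h1 : (fun x => u x ^ 2 * (2 * (V (t • x) - lam) + t * ⟪x, gradient V (t • x)⟫))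
          = fun x => t⁻¹ * F' t x := by
        funext x; rw [hF'def]; field_simp
      rw [h1]
      exact hF'int.const_mul _
    have hle : (fun x => u x ^ 2 * (2 * (V (t • x) - lam) + t * ⟪x, gradient V (t • x)⟫))
        ≤ᵐ[volume.restrict Ω] 0 := by
      rw [Filter.EventuallyLE, ae_restrict_iff' hΩm]
      filter_upwards with x hx
      have := hgneg x hx
      have := sq_nonneg (u x)
      simp only [Pi.zero_apply]
      nlinarith
    have hI0 : (∫ x in Ω, u x ^ 2 * (2 * (V (t • x) - lam) + t * ⟪x, gradient V (t • x)⟫)) ≤ 0 :=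
      integral_nonpos_of_ae hle
    rcases hI0.lt_or_eq with hI | hI
    · exact mul_neg_of_pos_of_neg (zpow_pos ht _) hI
    · exfalso
      -- integral is zero ⇒ integrand zero a.e. ⇒ u = 0 a.e. on Ω ⇒ ∫ u² = 0
      have hnn : 0 ≤ᵐ[volume.restrict Ω]
          (fun x => -(u x ^ 2 * (2 * (V (t • x) - lam) + t * ⟪x, gradient V (t • x)⟫))) := by
        filter_upwards [hle] with x hx
        simp only [Pi.zero_apply] at hx ⊢
        linarith
      have hzero := (integral_eq_zero_iff_of_nonneg_ae hnn hint.neg).1 (by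
        rw [integral_neg, hI, neg_zero])
      have hu20 : (fun x => u x ^ 2) =ᵐ[volume.restrict Ω] 0 := by
        have hmem := ae_restrict_mem hΩm (μ := volume) (s := Ω)
        filter_upwards [hzero, hmem] with x hx hxΩ
        simp only [Pi.zero_apply] at hx ⊢
        have hg := hgneg x hxΩ
        have : u x ^ 2 * (2 * (V (t • x) - lam) + t * ⟪x, gradient V (t • x)⟫) = 0 := by
          linarith
        rcases mul_eq_zero.1 this with h | h
        · exact h
        · exact absurd h (ne_of_lt hg)
      have : (∫ x in Ω, u x ^ 2) = 0 := by
        rw [integral_congr_ae hu20]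
        simp
      linarith
end
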